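/- Let r ∈ ℱ. Then the following three subsets of ℝ^N coincide: (i) the inverse image f^{−1}(r) = {u ∈ ℝ^N : f(u) = r}; (ii) the time-domain inverse-embedding set {Wz : z ∈ ℝ^N and S·(z_0², …, z_{N−1}²)ᵀ = r}; (iii) the frequency-domain inverse-embedding set of all u ∈ ℝ^N such that u = W̃^H U for some U ∈ ℂ^N with Im(U_0) = 0, U_{N−k} = conj(U_k) for 1 ≤ k ≤ N−1, and S̃·(|U_0|², …, |U_{N−1}|²)ᵀ = r. -/

import Mathlib

open scoped BigOperators
open Complex Matrix

noncomputable section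

/-- Circular autocovariance: `r i = ∑ t, u t * u ((t - i) mod N)`. -/
def autocov (N n : ℕ) (u : Fin N → ℝ) : Fin n → ℝ :=
  fun i => ∑ t : Fin N, u t * u ⟨(t.val + (N - i.val)) % N, Nat.mod_lt _ t.pos⟩

/-- The DFT matrix `W̃` with entries `N^{-1/2} e^{-j ϖ k t}`, `ϖ = 2π/N`. -/
def dft (N : ℕ) : Matrix (Fin N) (Fin N) ℂ := fun k t =>
  (Real.sqrt N : ℂ)⁻¹ * Complex.exp (-(Complex.I * (2 * Real.pi / N) * k.val * t.val))

/-- The matrix `S̃` with entries `e^{j ϖ i k}`. -/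
def Stilde (N n : ℕ) : Matrix (Fin n) (Fin N) ℂ := fun i k =>
  Complex.exp (Complex.I * (2 * Real.pi / N) * i.val * k.val)

/-- The matrix `S̃(γ)` with entries `γ e^{-j ϖ i k} + (1-γ) e^{j ϖ i k}`. -/
def StildeG (N n : ℕ) (γ : ℂ) : Matrix (Fin n) (Fin N) ℂ := fun i k =>
  γ * Complex.exp (-(Complex.I * (2 * Real.pi / N) * i.val * k.val)) +
    (1 - γ) * Complex.exp (Complex.I * (2 * Real.pi / N) * i.val * k.val)

/-- The real matrix `S` with entries `cos(ϖ i k)`. -/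
def Smat (N n : ℕ) : Matrix (Fin n) (Fin N) ℝ := fun i k =>
  Real.cos (2 * Real.pi / N * i.val * k.val)

/-- `ξ_m = (1, cos(mϖ), …, cos((N-1)mϖ))`. -/
def xi (N m : ℕ) : Fin N → ℝ := fun t => Real.cos (t.val * m * (2 * Real.pi / N))

/-- `ζ_m = (0, sin(mϖ), …, sin((N-1)mϖ))`. -/
def zeta (N m : ℕ) : Fin N → ℝ := fun t => Real.sin (t.val * m * (2 * Real.pi / N))

/-- The orthogonal matrix `W` whose columns are
`√(2/N)·[ξ_0/√2, ξ_1, …, ξ_{N/2-1}, ξ_{N/2}/√2, ζ_{N/2-1}, …, ζ_1]` for even `N` and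
`√(2/N)·[ξ_0/√2, ξ_1, …, ξ_{(N-1)/2}, ζ_{(N-1)/2}, …, ζ_1]` for odd `N`. -/
def Wmat (N : ℕ) : Matrix (Fin N) (Fin N) ℝ := fun t c =>
  Real.sqrt (2 / N) *
    (if 2 * c.val ≤ N then
      (if c.val = 0 ∨ 2 * c.val = N then (Real.sqrt 2)⁻¹ else 1) * xi N c.val t
    else zeta N (N - c.val) t)

/-- The cyclic shift (unit delay) matrix: `A t s = 1` iff `t ≡ s + 1 (mod N)`. -/
def shiftA (N : ℕ) : Matrix (Fin N) (Fin N) ℝ := fun t s =>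
  if (s.val + 1) % N = t.val then 1 else 0

/-- The set `X̃(r)` of real vectors `x` with `S̃ x = r`, nonnegative entries,
and the symmetry `x_k = x_{N-k}` for `1 ≤ k ≤ N-1`. -/
def Xset (N n : ℕ) (r : Fin n → ℝ) : Set (Fin N → ℝ) :=
  {x | (Stilde N n).mulVec (fun k => (x k : ℂ)) = (fun i => (r i : ℂ)) ∧
    (∀ k, 0 ≤ x k) ∧
    (∀ k : Fin N, ∀ hk : 1 ≤ k.val, x k = x ⟨N - k.val, Nat.sub_lt k.pos hk⟩)}

/-- The set `ℱ = {f(u) : uᵀu = C}` of attainable autocovariances. -/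
def Fset (N n : ℕ) (C : ℝ) : Set (Fin n → ℝ) :=
  {r | ∃ u : Fin N → ℝ, (∑ t, u t * u t) = C ∧ autocov N n u = r}

/-- Membership in the family `Λ_Q` (for even `N`): diagonal entries `1` at positions `0`
and `N/2`, arbitrary `2×2` unitary blocks at index pairs `{i, N-i}` for `1 ≤ i ≤ N/2-1`,
and all other entries zero. -/
def memLamQ {N : ℕ} (L : Matrix (Fin N) (Fin N) ℂ) : Prop :=
  (∀ a : Fin N, a.val = 0 → L a a = 1) ∧
  (∀ a : Fin N, 2 * a.val = N → L a a = 1) ∧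
  (∀ a b : Fin N, 1 ≤ a.val → 2 * a.val < N → a.val + b.val = N →
    (!![L a a, L a b; L b a, L b b]ᴴ * !![L a a, L a b; L b a, L b b] = 1 ∧
      !![L a a, L a b; L b a, L b b] * !![L a a, L a b; L b a, L b b]ᴴ = 1)) ∧
  (∀ a b : Fin N, ¬(a = b ∨ a.val + b.val = N) → L a b = 0)

def ee (N : ℕ) (m : ℤ) : ℂ := Complex.exp (((2 * Real.pi * m / N : ℝ) : ℂ) * Complex.I)

lemma ee_add (N : ℕ) (a b : ℤ) : ee N (a + b) = ee N a * ee N b := by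
  rw [ee, ee, ee, ← Complex.exp_add]; congr 1; push_cast; ring

lemma ee_zero (N : ℕ) : ee N 0 = 1 := by simp [ee]

lemma ee_N_mul (N : ℕ) (hN : 0 < N) (m : ℤ) : ee N (N * m) = 1 := by
  have hN'' : (N : ℂ) ≠ 0 := Nat.cast_ne_zero.mpr hN.ne' 
  rw [ee]
  rw [show (((2 * Real.pi * ((N : ℤ) * m : ℤ) / N : ℝ)) : ℂ) * Complex.I
      = (m : ℂ) * (2 * (Real.pi : ℝ) * Complex.I) by push_cast; field_simp]
  exact Complex.exp_int_mul_two_pi_mul_I m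

lemma ee_conj (N : ℕ) (m : ℤ) : (starRingEnd ℂ) (ee N m) = ee N (-m) := by
  rw [ee, ← Complex.exp_conj, RingHom.map_mul, Complex.conj_ofReal, Complex.conj_I, ee]
  congr 1
  push_cast; ring

lemma ee_pow (N : ℕ) (m : ℤ) (k : ℕ) : ee N m ^ k = ee N (m * k) := by
  induction k with
  | zero => simp [ee_zero]
  | succ k ih => rw [pow_succ, ih, ← ee_add]; congr 1; push_cast; ring

lemma sum_ee (N : ℕ) (hN : 0 < N) (m : ℤ) :
    ∑ k : Fin N, ee N (m * k) = if (N : ℤ) ∣ m then (N : ℂ) else 0 := by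
  by_cases hd : (N : ℤ) ∣ m
  · obtain ⟨c, rfl⟩ := hd
    rw [if_pos ⟨c, rfl⟩]
    have h : ∀ k : Fin N, ee N ((N : ℤ) * c * k) = 1 := by
      intro k
      rw [show (N : ℤ) * c * k = (N : ℤ) * (c * k) by ring, ee_N_mul N hN]
    simp [h]
  · rw [if_neg hd]
    have h1 : ee N m ≠ 1 := by
      intro h
      apply hd
      rw [ee, Complex.exp_eq_one_iff] at h
      obtain ⟨ℓ, hℓ⟩ := h
      have hN' : (N : ℝ) ≠ 0 := Nat.cast_ne_zero.mpr hN.ne'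
      have him : (2 * Real.pi * m / N : ℝ) = (ℓ : ℝ) * (2 * Real.pi) := by
        have := congrArg Complex.im hℓ
        simpa [Complex.ofReal_im, Complex.mul_im, Complex.I_im, Complex.I_re] using this
      have hm : (m : ℝ) = (ℓ : ℝ) * N := by
        field_simp at him
        nlinarith [Real.pi_pos, him]
      exact ⟨ℓ, by rw [mul_comm]; exact_mod_cast hm⟩
    have hsum : ∑ k : Fin N, ee N (m * k) = ∑ k ∈ Finset.range N, ee N m ^ k := by
      rw [Fin.sum_univ_eq_sum_range (fun k : ℕ => ee N (m * k)) N]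
      exact Finset.sum_congr rfl fun k _ => (ee_pow N m k).symm
    rw [hsum, geom_sum_eq h1, ee_pow N m N]
    rw [show m * (N : ℤ) = (N : ℤ) * m by ring, ee_N_mul N hN]
    simp

lemma collapse1 (N : ℕ) (iv tv : ℕ) (hi : iv ≤ N) (htv : tv < N) :
    (N:ℤ) ∣ ((iv:ℤ) + ((tv + (N - iv)) % N : ℕ) - tv) := by
  by_cases h : tv + (N - iv) < N
  · rw [Nat.mod_eq_of_lt h]; exact ⟨1, by omega⟩
  · have h2 : tv + (N - iv) - N < N := by omega
    rw [Nat.mod_eq_sub_mod (le_of_not_gt h), Nat.mod_eq_of_lt h2]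
    exact ⟨0, by omega⟩

lemma collapse2 (N : ℕ) (iv tv sv : ℕ) (hi : iv ≤ N) (htv : tv < N) (hs : sv < N)
    (hdvd : (N:ℤ) ∣ ((iv:ℤ) + sv - tv)) : sv = (tv + (N - iv)) % N := by
  set s0 := (tv + (N - iv)) % N with hs0
  have hd0 : (N:ℤ) ∣ ((iv:ℤ) + s0 - tv) := collapse1 N iv tv hi htv
  have hdd : (N:ℤ) ∣ ((sv:ℤ) - s0) := by
    have := dvd_sub hdvd hd0
    simpa using this
  have hb : |(sv:ℤ) - s0| < N := by
    have h1 : s0 < N := Nat.mod_lt _ (by omega)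
    rw [abs_lt]; constructor <;> [omega; omega]
  have := Int.eq_zero_of_abs_lt_dvd hdd hb
  omega
lemma dft_apply (N : ℕ) (k t : Fin N) :
    dft N k t = (Real.sqrt N : ℂ)⁻¹ * ee N (-((k.val : ℤ) * t.val)) := by
  rw [dft, ee]; congr 1; congr 1; push_cast; ring

lemma Vexp (N : ℕ) (u : Fin N → ℝ) (k : Fin N) :
    (dft N).mulVec (fun t => (u t : ℂ)) k
      = (Real.sqrt N : ℂ)⁻¹ * ∑ t : Fin N, ee N (-((k.val : ℤ) * t.val)) * u t := by
  simp only [Matrix.mulVec, dotProduct]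
  rw [Finset.mul_sum]
  refine Finset.sum_congr rfl fun t _ => ?_
  rw [dft_apply]; ring

lemma Vconj (N : ℕ) (u : Fin N → ℝ) (k : Fin N) :
    (starRingEnd ℂ) ((dft N).mulVec (fun t => (u t : ℂ)) k)
      = (Real.sqrt N : ℂ)⁻¹ * ∑ s : Fin N, ee N ((k.val : ℤ) * s.val) * u s := by
  rw [Vexp, RingHom.map_mul, map_sum]
  congr 1
  · rw [map_inv₀, Complex.conj_ofReal]
  · refine Finset.sum_congr rfl fun s _ => ?_
    rw [RingHom.map_mul, ee_conj, Complex.conj_ofReal, neg_neg]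

lemma sqrt_inv_sq (N : ℕ) : ((Real.sqrt N : ℝ) : ℂ)⁻¹ * ((Real.sqrt N : ℝ) : ℂ)⁻¹ = (N : ℂ)⁻¹ := by
  rw [← mul_inv, ← Complex.ofReal_mul, Real.mul_self_sqrt (Nat.cast_nonneg N)]
  norm_num

lemma WK (N n : ℕ) (hN : 0 < N) (hNn : n ≤ N) (u : Fin N → ℝ) (i : Fin n) :
    ∑ k : Fin N, ee N ((i.val : ℤ) * k.val) *
      ((dft N).mulVec (fun t => (u t : ℂ)) k *
        (starRingEnd ℂ) ((dft N).mulVec (fun t => (u t : ℂ)) k))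
    = ((∑ t : Fin N, u t * u ⟨(t.val + (N - i.val)) % N, Nat.mod_lt _ hN⟩ : ℝ) : ℂ) := by
  have hi : i.val ≤ N := le_trans i.isLt.le hNn
  have hstep : ∀ k : Fin N,
      ee N ((i.val : ℤ) * k.val) *
        ((dft N).mulVec (fun t => (u t : ℂ)) k *
          (starRingEnd ℂ) ((dft N).mulVec (fun t => (u t : ℂ)) k))
      = (N : ℂ)⁻¹ * ∑ t : Fin N, ∑ s : Fin N,
          (u t * u s : ℂ) * ee N (((i.val : ℤ) + s.val - t.val) * k.val) := by
    intro k
    rw [Vconj, Vexp]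
    rw [show ∀ a b c d : ℂ, a * ((b * c) * (b * d)) = (b * b) * (a * (c * d)) from
      fun a b c d => by ring, sqrt_inv_sq]
    congr 1
    rw [Finset.sum_mul_sum, Finset.mul_sum]
    refine Finset.sum_congr rfl fun t _ => ?_
    rw [Finset.mul_sum]
    refine Finset.sum_congr rfl fun s _ => ?_
    rw [show ∀ a b c d e : ℂ, a * ((b * c) * (d * e)) = (c * e) * (a * b * d) from
      fun a b c d e => by ring]
    congr 1
    rw [← ee_add, ← ee_add]
    congr 1
    push_cast
    ring
  rw [Finset.sum_congr rfl fun k _ => hstep k, ← Finset.mul_sum]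
  rw [Finset.sum_comm]
  have hswap : ∀ t : Fin N, ∑ k : Fin N, ∑ s : Fin N,
      (u t * u s : ℂ) * ee N (((i.val : ℤ) + s.val - t.val) * k.val)
      = (u t * u ⟨(t.val + (N - i.val)) % N, Nat.mod_lt _ hN⟩ : ℝ) * N := by
    intro t
    rw [Finset.sum_comm]
    have hinner : ∀ s : Fin N,
        ∑ k : Fin N, (u t * u s : ℂ) * ee N (((i.val : ℤ) + s.val - t.val) * k.val)
        = (u t * u s : ℂ) * (if (N:ℤ) ∣ ((i.val : ℤ) + s.val - t.val) then (N:ℂ) else 0) := by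
      intro s
      rw [← Finset.mul_sum, sum_ee N hN]
    rw [Finset.sum_congr rfl fun s _ => hinner s]
    set s0 : Fin N := ⟨(t.val + (N - i.val)) % N, Nat.mod_lt _ hN⟩ with hs0
    rw [Finset.sum_eq_single s0]
    · rw [if_pos (collapse1 N i.val t.val hi t.isLt)]
      push_cast
      ring
    · intro s _ hne
      rw [if_neg, mul_zero]
      intro hdvd
      exact hne (Fin.ext (collapse2 N i.val t.val s.val hi t.isLt s.isLt hdvd))
    · intro h
      exact absurd (Finset.mem_univ s0) h
  rw [Finset.sum_congr rfl fun t _ => hswap t]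
  rw [← Finset.sum_mul]
  push_cast
  rw [show ∀ (b : ℂ), (N:ℂ)⁻¹ * (b * N) = b * ((N:ℂ)⁻¹ * N) from fun b => by ring]
  rw [inv_mul_cancel₀ (by exact_mod_cast hN.ne' : (N:ℂ) ≠ 0), mul_one]

lemma ee_add_N_mul (N : ℕ) (hN : 0 < N) (a b : ℤ) : ee N (a + N * b) = ee N a := by
  rw [ee_add, ee_N_mul N hN, mul_one]

lemma fin_dvd_iff (N : ℕ) (a b : Fin N) : (N:ℤ) ∣ ((a.val:ℤ) - b.val) ↔ a = b := by
  constructor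
  · intro h
    have hb : |(a.val:ℤ) - b.val| < N := by
      rw [abs_lt]
      constructor <;> [(have := b.isLt; omega); (have := a.isLt; omega)]
    have := Int.eq_zero_of_abs_lt_dvd h hb
    exact Fin.ext (by omega)
  · rintro rfl; simp

lemma dft_unitary1 (N : ℕ) (hN : 0 < N) : (dft N)ᴴ * dft N = 1 := by
  ext a b
  rw [Matrix.mul_apply, Matrix.one_apply]
  have h : ∀ k : Fin N, (dft N)ᴴ a k * dft N k b
      = (N:ℂ)⁻¹ * ee N (((a.val:ℤ) - b.val) * k.val) := by
    intro k
    rw [Matrix.conjTranspose_apply, dft_apply, dft_apply]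
    rw [show star ((Real.sqrt N : ℂ)⁻¹ * ee N (-((k.val:ℤ) * a.val)))
        = (starRingEnd ℂ) ((Real.sqrt N : ℂ)⁻¹ * ee N (-((k.val:ℤ) * a.val))) from rfl]
    rw [RingHom.map_mul, map_inv₀, Complex.conj_ofReal, ee_conj, neg_neg]
    rw [show ∀ x y w : ℂ, x * y * (x * w) = (x * x) * (y * w) from fun x y w => by ring]
    rw [sqrt_inv_sq, ← ee_add]
    congr 2
    push_cast; ring
  rw [Finset.sum_congr rfl fun k _ => h k, ← Finset.mul_sum, sum_ee N hN]
  by_cases hab : a = b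
  · subst hab
    rw [if_pos (by simp), if_pos rfl, inv_mul_cancel₀ (by exact_mod_cast hN.ne' : (N:ℂ) ≠ 0)]
  · rw [if_neg (fun h => hab ((fin_dvd_iff N a b).mp h)), if_neg hab, mul_zero]

lemma dft_unitary2 (N : ℕ) (hN : 0 < N) : dft N * (dft N)ᴴ = 1 := by
  ext a b
  rw [Matrix.mul_apply, Matrix.one_apply]
  have h : ∀ k : Fin N, dft N a k * (dft N)ᴴ k b
      = (N:ℂ)⁻¹ * ee N (((b.val:ℤ) - a.val) * k.val) := by
    intro k
    rw [Matrix.conjTranspose_apply, dft_apply, dft_apply]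
    rw [show star ((Real.sqrt N : ℂ)⁻¹ * ee N (-((b.val:ℤ) * k.val)))
        = (starRingEnd ℂ) ((Real.sqrt N : ℂ)⁻¹ * ee N (-((b.val:ℤ) * k.val))) from rfl]
    rw [RingHom.map_mul, map_inv₀, Complex.conj_ofReal, ee_conj, neg_neg]
    rw [show ∀ x y w : ℂ, x * y * (x * w) = (x * x) * (y * w) from fun x y w => by ring]
    rw [sqrt_inv_sq, ← ee_add]
    congr 2
    push_cast; ring
  rw [Finset.sum_congr rfl fun k _ => h k, ← Finset.mul_sum, sum_ee N hN]
  by_cases hab : a = b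
  · subst hab
    rw [if_pos (by simp), if_pos rfl, inv_mul_cancel₀ (by exact_mod_cast hN.ne' : (N:ℂ) ≠ 0)]
  · rw [if_neg (fun h => hab (((fin_dvd_iff N b a).mp h)).symm), if_neg hab, mul_zero]

lemma dft_left_inv (N : ℕ) (hN : 0 < N) (v : Fin N → ℂ) :
    (dft N)ᴴ.mulVec ((dft N).mulVec v) = v := by
  rw [Matrix.mulVec_mulVec, dft_unitary1 N hN, Matrix.one_mulVec]

lemma dft_right_inv (N : ℕ) (hN : 0 < N) (v : Fin N → ℂ) :
    (dft N).mulVec ((dft N)ᴴ.mulVec v) = v := by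
  rw [Matrix.mulVec_mulVec, dft_unitary2 N hN, Matrix.one_mulVec]

lemma ee_neg_index (N : ℕ) (hN : 0 < N) [NeZero N] (k : Fin N) (m : ℤ) :
    ee N ((((-k : Fin N).val : ℤ)) * m) = ee N (-((k.val:ℤ) * m)) := by
  have hval : ((-k : Fin N)).val = (N - k.val) % N := rfl
  by_cases hk : k.val = 0
  · rw [hval, hk]
    simp [Nat.sub_zero, Nat.mod_self]
  · have h1 : (N - k.val) % N = N - k.val := Nat.mod_eq_of_lt (by have := k.isLt; omega)
    rw [hval, h1]
    rw [show (((N - k.val : ℕ):ℤ)) * m = -((k.val:ℤ) * m) + N * m by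
      have := k.isLt; push_cast [Nat.cast_sub (le_of_lt k.isLt)]; ring]
    rw [ee_add_N_mul N hN]

lemma F_conj (N : ℕ) (hN : 0 < N) [NeZero N] (u : Fin N → ℝ) (k : Fin N) :
    (starRingEnd ℂ) ((dft N).mulVec (fun t => (u t : ℂ)) k)
      = (dft N).mulVec (fun t => (u t : ℂ)) (-k) := by
  rw [Vconj, Vexp]
  congr 1
  refine Finset.sum_congr rfl fun s _ => ?_
  congr 1
  rw [← ee_conj, ee_neg_index N hN k s.val, ee_conj, neg_neg]

lemma sum_pair {N : ℕ} [NeZero N] (f g : Fin N → ℂ)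
    (h : ∀ c, f c + f (-c) = g c + g (-c)) : ∑ c, f c = ∑ c, g c := by
  have hf : ∑ c, f (-c) = ∑ c, f c := Fintype.sum_equiv (Equiv.neg (Fin N)) _ _ (fun c => rfl)
  have hg : ∑ c, g (-c) = ∑ c, g c := Fintype.sum_equiv (Equiv.neg (Fin N)) _ _ (fun c => rfl)
  have h2 : (2:ℂ) * ∑ c, f c = (2:ℂ) * ∑ c, g c := by
    rw [two_mul, two_mul]
    calc (∑ c, f c) + ∑ c, f c = (∑ c, f c) + ∑ c, f (-c) := by rw [hf]
    _ = ∑ c, (f c + f (-c)) := by rw [← Finset.sum_add_distrib]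
    _ = ∑ c, (g c + g (-c)) := Finset.sum_congr rfl fun c _ => h c
    _ = (∑ c, g c) + ∑ c, g (-c) := by rw [Finset.sum_add_distrib]
    _ = (∑ c, g c) + ∑ c, g c := by rw [hg]
  exact mul_left_cancel₀ two_ne_zero h2

lemma ee_cos_sin (N : ℕ) (m : ℤ) :
    ee N m = ((Real.cos (2 * Real.pi * m / N) : ℝ) : ℂ)
      + ((Real.sin (2 * Real.pi * m / N) : ℝ) : ℂ) * Complex.I := by
  rw [ee, Complex.exp_mul_I, ← Complex.ofReal_cos, ← Complex.ofReal_sin]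

lemma ee_neg_cos_sin (N : ℕ) (m : ℤ) :
    ee N (-m) = ((Real.cos (2 * Real.pi * m / N) : ℝ) : ℂ)
      - ((Real.sin (2 * Real.pi * m / N) : ℝ) : ℂ) * Complex.I := by
  rw [ee_cos_sin]
  rw [show (2 * Real.pi * ((-m : ℤ) : ℝ) / N) = -(2 * Real.pi * (m:ℝ) / N) by push_cast; ring]
  rw [Real.cos_neg, Real.sin_neg]
  push_cast
  ring

lemma sqrt2N_key (N : ℕ) (hN : 0 < N) :
    ((Real.sqrt (2 / (N:ℝ)) : ℝ) : ℂ)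
      = 2 / (((Real.sqrt 2 : ℝ) : ℂ) * ((Real.sqrt N : ℝ) : ℂ)) := by
  have h2 : Real.sqrt 2 ≠ 0 := by positivity
  have hNpos : (0:ℝ) < N := by exact_mod_cast hN
  have hNr : Real.sqrt (N:ℝ) ≠ 0 := by positivity
  rw [Real.sqrt_div (by norm_num) N]
  rw [show (Real.sqrt 2 / Real.sqrt N : ℝ)
      = 2 / (Real.sqrt 2 * Real.sqrt N) by
    rw [div_eq_div_iff (by positivity) (by positivity)]
    have h22 : Real.sqrt 2 * Real.sqrt 2 = 2 := Real.mul_self_sqrt (by norm_num)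
    rw [← mul_assoc, h22]]
  push_cast
  ring

lemma sqrtN_ne (N : ℕ) (hN : 0 < N) : ((Real.sqrt N : ℝ) : ℂ) ≠ 0 := by
  have hNpos : (0:ℝ) < N := by exact_mod_cast hN
  simp only [ne_eq, Complex.ofReal_eq_zero]
  positivity

lemma sqrt2_ne : ((Real.sqrt 2 : ℝ) : ℂ) ≠ 0 := by
  simp only [ne_eq, Complex.ofReal_eq_zero]
  positivity

lemma combine (A B c d : ℝ) :
    ((A:ℂ) + B * Complex.I) * (c - Complex.I * d)
      + ((A:ℂ) - B * Complex.I) * (c + Complex.I * d)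
    = 2*A*c + 2*B*d := by
  linear_combination (-2*(d:ℂ)*(B:ℂ)) * Complex.I_mul_I

def Uof (N : ℕ) [NeZero N] (z : Fin N → ℝ) : Fin N → ℂ := fun k =>
  if k.val = 0 ∨ 2 * k.val = N then (z k : ℂ)
  else if 2 * k.val < N then
    ((Real.sqrt 2 : ℝ) : ℂ)⁻¹ * ((z k : ℂ) - Complex.I * (z (-k) : ℂ))
  else ((Real.sqrt 2 : ℝ) : ℂ)⁻¹ * ((z (-k) : ℂ) + Complex.I * (z k : ℂ))

lemma neg_self_of (N : ℕ) [NeZero N] (c : Fin N) (h : c.val = 0 ∨ 2 * c.val = N) : -c = c := by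
  apply Fin.ext
  have : (-c).val = (N - c.val) % N := rfl
  rw [this]
  rcases h with h | h
  · rw [h]; simp
  · have hc : c.val < N := c.isLt
    have hN : 0 < N := Nat.pos_of_ne_zero (NeZero.ne N)
    have hlt : N - c.val < N := by omega
    rw [Nat.mod_eq_of_lt hlt]
    omega

lemma neg_val_of (N : ℕ) [NeZero N] (c : Fin N) (h : c.val ≠ 0) : (-c).val = N - c.val := by
  have : (-c).val = (N - c.val) % N := rfl
  rw [this]
  exact Nat.mod_eq_of_lt (by have := c.isLt; omega)

lemma h22C : ((Real.sqrt 2 : ℝ) : ℂ) * ((Real.sqrt 2 : ℝ) : ℂ) = 2 := by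
  rw [← Complex.ofReal_mul, Real.mul_self_sqrt (by norm_num)]
  norm_num

lemma main1 (N : ℕ) (hN : 0 < N) [NeZero N] (z : Fin N → ℝ) :
    (fun t => (((Wmat N).mulVec z) t : ℂ)) = (dft N)ᴴ.mulVec (Uof N z) := by
  funext t
  have hL : (((Wmat N).mulVec z) t : ℂ) = ∑ c : Fin N, ((Wmat N t c * z c : ℝ) : ℂ) := by
    simp only [Matrix.mulVec, dotProduct]
    push_cast
    rfl
  have hR : (dft N)ᴴ.mulVec (Uof N z) t
      = ∑ k : Fin N, ((Real.sqrt N : ℝ):ℂ)⁻¹ * ee N ((k.val:ℤ) * t.val) * Uof N z k := by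
    simp only [Matrix.mulVec, dotProduct]
    refine Finset.sum_congr rfl fun k _ => ?_
    rw [Matrix.conjTranspose_apply,
      show star (dft N k t) = (starRingEnd ℂ) (dft N k t) from rfl,
      dft_apply, RingHom.map_mul, map_inv₀, Complex.conj_ofReal, ee_conj, neg_neg]
  rw [hL, hR]
  apply sum_pair
  have key : ∀ c : Fin N, 2 * c.val ≤ N →
      ((Wmat N t c * z c : ℝ) : ℂ) + ((Wmat N t (-c) * z (-c) : ℝ) : ℂ)
      = ((Real.sqrt N : ℝ):ℂ)⁻¹ * ee N ((c.val:ℤ) * t.val) * Uof N z c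
        + ((Real.sqrt N : ℝ):ℂ)⁻¹ * ee N (((-c : Fin N).val:ℤ) * t.val) * Uof N z (-c) := by
    intro c hc
    by_cases h0 : c.val = 0 ∨ 2 * c.val = N
    · have hcc : -c = c := neg_self_of N c h0
      rw [hcc]
      have hW : Wmat N t c = Real.sqrt (2/(N:ℝ)) * ((Real.sqrt 2)⁻¹ * xi N c.val t) := by
        simp only [Wmat]
        rw [if_pos hc, if_pos h0]
      have hU : Uof N z c = ((z c : ℝ) : ℂ) := by
        simp only [Uof]
        rw [if_pos h0]
      rcases h0 with h00 | h0N
      · have hxi : xi N c.val t = 1 := by rw [xi, h00]; norm_num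
        have hee : ee N ((c.val:ℤ) * t.val) = 1 := by
          rw [h00]
          norm_num [ee_zero]
        rw [hW, hU, hxi, hee]
        push_cast
        rw [sqrt2N_key N hN]
        field_simp [sqrtN_ne N hN, sqrt2_ne]
        linear_combination (-(z c : ℂ)) * h22C
      · have hcne : c.val ≠ 0 := by omega
        have hNe : (N:ℝ) = 2 * c.val := by exact_mod_cast h0N.symm
        have hc0 : (c.val : ℝ) ≠ 0 := by exact_mod_cast hcne
        have harg : 2 * Real.pi * (((c.val : ℤ) * t.val : ℤ):ℝ) / N = t.val * Real.pi := by
          rw [hNe]; push_cast; field_simp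
        have hee : ee N ((c.val:ℤ) * t.val) = ((Real.cos ((t.val:ℝ) * Real.pi) : ℝ) : ℂ) := by
          rw [ee_cos_sin, harg, Real.sin_nat_mul_pi]
          push_cast
          ring
        have hxi : xi N c.val t = Real.cos ((t.val:ℝ) * Real.pi) := by
          rw [xi]
          congr 1
          rw [hNe]; field_simp
        rw [hW, hU, hxi, hee]
        set Ct := Real.cos ((t.val:ℝ) * Real.pi) with hCt
        push_cast
        rw [sqrt2N_key N hN]
        field_simp [sqrtN_ne N hN, sqrt2_ne]
        linear_combination (-(z c : ℂ) * (Ct : ℂ)) * h22C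
    · push_neg at h0
      have hne0 : c.val ≠ 0 := h0.1
      have hlt : 2 * c.val < N := lt_of_le_of_ne hc h0.2
      have hnv : (-c).val = N - c.val := neg_val_of N c hne0
      have hWc : Wmat N t c = Real.sqrt (2/(N:ℝ)) * (1 * xi N c.val t) := by
        simp only [Wmat]
        rw [if_pos hc, if_neg (by push_neg; exact ⟨hne0, fun h => (h0.2) h⟩)]
      have hWn : Wmat N t (-c) = Real.sqrt (2/(N:ℝ)) * zeta N c.val t := by
        simp only [Wmat]
        rw [if_neg (by rw [hnv]; omega)]
        congr 2
        rw [hnv]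
        omega
      have hUc : Uof N z c
          = ((Real.sqrt 2:ℝ):ℂ)⁻¹ * ((z c : ℂ) - Complex.I * (z (-c) : ℂ)) := by
        simp only [Uof]
        rw [if_neg (by push_neg; exact ⟨hne0, fun h => (h0.2) h⟩), if_pos hlt]
      have hUn : Uof N z (-c)
          = ((Real.sqrt 2:ℝ):ℂ)⁻¹ * ((z c : ℂ) + Complex.I * (z (-c) : ℂ)) := by
        simp only [Uof]
        rw [if_neg (by rw [hnv]; push_neg; constructor <;> omega),
          if_neg (by rw [hnv]; omega), neg_neg]
      have heen : ee N (((-c : Fin N).val : ℤ) * t.val)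
          = ee N (-((c.val : ℤ) * t.val)) := ee_neg_index N hN c t.val
      have hxi : xi N c.val t = Real.cos (2*Real.pi*(((c.val:ℤ) * t.val : ℤ):ℝ)/N) := by
        rw [xi]; congr 1; push_cast; ring
      have hzeta : zeta N c.val t = Real.sin (2*Real.pi*(((c.val:ℤ) * t.val : ℤ):ℝ)/N) := by
        rw [zeta]; congr 1; push_cast; ring
      rw [hWc, hWn, hUc, hUn, heen, ee_cos_sin N _, ee_neg_cos_sin N _, hxi, hzeta]
      set Ct := Real.cos (2*Real.pi*(((c.val:ℤ) * t.val : ℤ):ℝ)/N) with hCt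
      set St := Real.sin (2*Real.pi*(((c.val:ℤ) * t.val : ℤ):ℝ)/N) with hSt
      push_cast
      rw [sqrt2N_key N hN]
      field_simp [sqrtN_ne N hN, sqrt2_ne]
      linear_combination (2 * (z (-c) : ℂ) * (St : ℂ)) * Complex.I_mul_I
  intro c
  by_cases h : 2 * c.val ≤ N
  · exact key c h
  · have h2 : 2 * (-c).val ≤ N := by
      rw [neg_val_of N c (by have := c.isLt; omega)]
      omega
    have hk := key (-c) h2
    rw [neg_neg] at hk
    linear_combination hk

lemma Uof_normsq (N : ℕ) [NeZero N] (z : Fin N → ℝ) (k : Fin N) :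
    Uof N z k * (starRingEnd ℂ) (Uof N z k) = ((((z k)^2 + (z (-k))^2)/2 : ℝ) : ℂ) := by
  by_cases h0 : k.val = 0 ∨ 2 * k.val = N
  · have hcc : -k = k := neg_self_of N k h0
    simp only [Uof, if_pos h0]
    rw [hcc, Complex.conj_ofReal]
    push_cast; ring
  · by_cases hlt : 2 * k.val < N
    · simp only [Uof, if_neg h0, if_pos hlt]
      rw [RingHom.map_mul, map_inv₀, Complex.conj_ofReal, map_sub, RingHom.map_mul, Complex.conj_I,
        Complex.conj_ofReal, Complex.conj_ofReal]
      push_cast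
      field_simp [sqrt2_ne]
      linear_combination (-2 * (z (-k) : ℂ)^2) * Complex.I_mul_I
        + (-(((z k : ℂ))^2 + (z (-k) : ℂ)^2)) * h22C
    · simp only [Uof, if_neg h0, if_neg hlt]
      rw [RingHom.map_mul, map_inv₀, Complex.conj_ofReal, map_add, RingHom.map_mul, Complex.conj_I,
        Complex.conj_ofReal, Complex.conj_ofReal]
      push_cast
      field_simp [sqrt2_ne]
      linear_combination (-2 * (z k : ℂ)^2) * Complex.I_mul_I
        + (-(((z k : ℂ))^2 + (z (-k) : ℂ)^2)) * h22C

lemma Sident (N n : ℕ) (hN : 0 < N) [NeZero N] (z : Fin N → ℝ) (i : Fin n) :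
    ∑ k : Fin N, ee N ((i.val:ℤ) * k.val) * (Uof N z k * (starRingEnd ℂ) (Uof N z k))
      = (((Smat N n).mulVec (fun k => z k ^ 2) i : ℝ) : ℂ) := by
  have hR : (((Smat N n).mulVec (fun k => z k ^ 2) i : ℝ) : ℂ)
      = ∑ k : Fin N, ((Smat N n i k * z k ^ 2 : ℝ) : ℂ) := by
    simp only [Matrix.mulVec, dotProduct]
    push_cast
    rfl
  rw [hR, Finset.sum_congr rfl fun k _ => by rw [Uof_normsq N z k]]
  apply sum_pair
  intro k
  have hSk : Smat N n i k = Real.cos (2*Real.pi*(((i.val:ℤ) * k.val : ℤ):ℝ)/N) := by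
    simp only [Smat]
    congr 1
    push_cast; ring
  have hSn : Smat N n i (-k) = Real.cos (2*Real.pi*(((i.val:ℤ) * k.val : ℤ):ℝ)/N) := by
    by_cases hk0 : k.val = 0
    · have : -k = k := neg_self_of N k (Or.inl hk0)
      rw [this, hSk]
    · have hN : 0 < N := Nat.pos_of_ne_zero (NeZero.ne N)
      have hnv : (-k).val = N - k.val := neg_val_of N k hk0
      simp only [Smat]
      rw [hnv]
      rw [show (2*Real.pi/N * (i.val:ℝ) * ((N - k.val : ℕ):ℝ))
          = -(2*Real.pi*(((i.val:ℤ) * k.val : ℤ):ℝ)/N) + (i.val:ℤ) * (2*Real.pi) by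
        have hNne : (N:ℝ) ≠ 0 := Nat.cast_ne_zero.mpr hN.ne'
        push_cast [Nat.cast_sub k.isLt.le]
        field_simp
        ring]
      rw [Real.cos_add_int_mul_two_pi, Real.cos_neg]
  have heen : ee N ((i.val:ℤ) * ((-k : Fin N).val))
      = ee N (-((i.val:ℤ) * k.val)) := by
    have hN : 0 < N := Nat.pos_of_ne_zero (NeZero.ne N)
    rw [show ((i.val:ℤ) * ((-k : Fin N).val)) = (((-k : Fin N).val : ℤ) * i.val) by ring,
      ee_neg_index N hN k i.val]
    congr 1
    ring
  rw [neg_neg, heen, hSk, hSn,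
    ee_cos_sin N ((i.val:ℤ) * k.val), ee_neg_cos_sin N ((i.val:ℤ) * k.val)]
  push_cast
  ring

lemma Stilde_mulVec (N n : ℕ) (x : Fin N → ℂ) (i : Fin n) :
    (Stilde N n).mulVec x i = ∑ k : Fin N, ee N ((i.val:ℤ) * k.val) * x k := by
  simp only [Matrix.mulVec, dotProduct]
  refine Finset.sum_congr rfl fun k _ => ?_
  congr 1
  simp only [Stilde, ee]
  congr 1
  push_cast; ring

lemma abs_sq' (w : ℂ) : ((‖w‖ : ℝ) : ℂ)^2 = w * (starRingEnd ℂ) w := by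
  rw [← Complex.ofReal_pow, Complex.sq_norm, Complex.mul_conj]

lemma WK' (N n : ℕ) (hN : 0 < N) (hNn : n ≤ N) (u : Fin N → ℝ) (i : Fin n) :
    ∑ k : Fin N, ee N ((i.val : ℤ) * k.val) *
      ((dft N).mulVec (fun t => (u t : ℂ)) k *
        (starRingEnd ℂ) ((dft N).mulVec (fun t => (u t : ℂ)) k))
    = ((autocov N n u i : ℝ) : ℂ) := WK N n hN hNn u i


/-- for `r ∈ ℱ`, the inverse image `f⁻¹(r)`, the time-domain
inverse-embedding set, and the frequency-domain inverse-embedding set coincide. -/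
theorem stmt5 (N n : ℕ) (hn : 1 ≤ n) (hNn : n ≤ N) (C : ℝ) (hC : 0 < C)
    (r : Fin n → ℝ) (hr : r ∈ Fset N n C) :
    ({u : Fin N → ℝ | autocov N n u = r} =
      {u : Fin N → ℝ | ∃ z : Fin N → ℝ, u = (Wmat N).mulVec z ∧
        (Smat N n).mulVec (fun k => z k ^ 2) = r}) ∧
    ({u : Fin N → ℝ | autocov N n u = r} =
      {u : Fin N → ℝ | ∃ U : Fin N → ℂ,
        (fun t => (u t : ℂ)) = (dft N)ᴴ.mulVec U ∧
        (U ⟨0, by omega⟩).im = 0 ∧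
        (∀ k : Fin N, ∀ hk : 1 ≤ k.val,
          U ⟨N - k.val, Nat.sub_lt k.pos hk⟩ = starRingEnd ℂ (U k)) ∧
        (Stilde N n).mulVec (fun k => ((‖U k‖ : ℂ) ^ 2)) =
          fun i => (r i : ℂ)}) := by
  have hN : 0 < N := by omega
  haveI : NeZero N := ⟨by omega⟩
  constructor
  · -- time-domain
    ext u
    simp only [Set.mem_setOf_eq]
    constructor
    · intro h
      set U := (dft N).mulVec (fun t => (u t : ℂ)) with hUdef
      have hsym : ∀ k : Fin N, (starRingEnd ℂ) (U k) = U (-k) := F_conj N hN u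
      set z : Fin N → ℝ := fun c =>
        if 2 * c.val ≤ N then
          (if c.val = 0 ∨ 2 * c.val = N then 1 else Real.sqrt 2) * (U c).re
        else -(Real.sqrt 2) * (U (-c)).im with hzdef
      have hs1 : ((Real.sqrt 2 : ℝ) : ℂ)⁻¹ * ((Real.sqrt 2 : ℝ) : ℂ) = 1 :=
        inv_mul_cancel₀ sqrt2_ne
      have hUof : Uof N z = U := by
        funext k
        by_cases h0 : k.val = 0 ∨ 2 * k.val = N
        · have hcc : -k = k := neg_self_of N k h0
          have hre : (((U k).re : ℝ) : ℂ) = U k := Complex.conj_eq_iff_re.mp (by rw [hsym k, hcc])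
          have hle : 2 * k.val ≤ N := by rcases h0 with h0 | h0 <;> omega
          have hz : z k = (U k).re := by
            simp only [hzdef]
            rw [if_pos hle, if_pos h0, one_mul]
          simp only [Uof, if_pos h0]
          rw [hz, hre]
        · have hne0 : k.val ≠ 0 := fun hh => h0 (Or.inl hh)
          have hnv : (-k).val = N - k.val := neg_val_of N k hne0
          by_cases hlt : 2 * k.val < N
          · have hzk : z k = Real.sqrt 2 * (U k).re := by
              simp only [hzdef]
              rw [if_pos (le_of_lt hlt), if_neg h0]
            have hzn : z (-k) = -(Real.sqrt 2) * (U k).im := by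
              simp only [hzdef]
              rw [if_neg (by rw [hnv]; omega), neg_neg]
            simp only [Uof, if_neg h0, if_pos hlt]
            rw [hzk, hzn]
            set a := (U k).re with ha
            set b := (U k).im with hb
            rw [show U k = (a : ℂ) + (b : ℂ) * Complex.I from (Complex.re_add_im (U k)).symm]
            push_cast
            linear_combination ((a : ℂ) + Complex.I * b) * hs1
          · have hzk : z k = -(Real.sqrt 2) * (U (-k)).im := by
              simp only [hzdef]
              rw [if_neg (by omega)]
            have hzn : z (-k) = Real.sqrt 2 * (U (-k)).re := by
              simp only [hzdef]
              rw [if_pos (by rw [hnv]; omega), if_neg (by rw [hnv]; push_neg; omega)]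
            simp only [Uof, if_neg h0, if_neg hlt]
            rw [hzk, hzn]
            set a := (U (-k)).re with ha
            set b := (U (-k)).im with hb
            have hck : U k = (a : ℂ) - (b : ℂ) * Complex.I := by
              have h1 := hsym (-k)
              rw [neg_neg] at h1
              rw [← h1, show U (-k) = (a : ℂ) + (b : ℂ) * Complex.I from
                (Complex.re_add_im (U (-k))).symm]
              rw [map_add, RingHom.map_mul, Complex.conj_ofReal, Complex.conj_ofReal,
                Complex.conj_I]
              ring
            rw [hck]
            push_cast
            linear_combination ((a : ℂ) - Complex.I * b) * hs1
      have hu_eq : u = (Wmat N).mulVec z := by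
        have hm := main1 N hN z
        rw [hUof, hUdef] at hm
        rw [dft_left_inv N hN] at hm
        funext t
        exact (Complex.ofReal_inj.mp (congrFun hm t)).symm
      refine ⟨z, hu_eq, ?_⟩
      funext i
      have hwk := WK' N n hN hNn u i
      rw [← hUdef] at hwk
      rw [← hUof] at hwk
      have hfin := (Sident N n hN z i).symm.trans hwk
      rw [h] at hfin
      exact Complex.ofReal_inj.mp hfin
    · rintro ⟨z, hu, hS⟩
      subst hu
      funext i
      have hm := main1 N hN z
      have hVU : (dft N).mulVec (fun t => ((((Wmat N).mulVec z) t : ℝ) : ℂ)) = Uof N z := by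
        rw [hm, dft_right_inv N hN]
      have hwk := WK' N n hN hNn ((Wmat N).mulVec z) i
      rw [hVU] at hwk
      have hfin := (Sident N n hN z i).symm.trans hwk
      rw [hS] at hfin
      exact Complex.ofReal_inj.mp hfin.symm
  · -- frequency-domain
    ext u
    simp only [Set.mem_setOf_eq]
    constructor
    · intro h
      refine ⟨(dft N).mulVec (fun t => (u t : ℂ)), (dft_left_inv N hN _).symm, ?_, ?_, ?_⟩
      · have h00 : (⟨0, by omega⟩ : Fin N) = (0 : Fin N) := by
          apply Fin.ext
          simp
        have hconj := F_conj N hN u 0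
        rw [neg_zero] at hconj
        rw [h00]
        exact Complex.conj_eq_iff_im.mp hconj
      · intro k hk
        have hconj := F_conj N hN u k
        have hidx : (⟨N - k.val, Nat.sub_lt k.pos hk⟩ : Fin N) = -k :=
          Fin.ext (by rw [neg_val_of N k (by omega)])
        rw [hidx, ← hconj]
      · funext i
        rw [Stilde_mulVec]
        rw [Finset.sum_congr rfl fun k _ => by rw [abs_sq']]
        rw [WK' N n hN hNn u i, h]
    · rintro ⟨U, hu, _, _, hS⟩
      have hU : (dft N).mulVec (fun t => (u t : ℂ)) = U := by
        rw [hu, dft_right_inv N hN]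
      funext i
      have hSi := congrFun hS i
      rw [Stilde_mulVec] at hSi
      rw [Finset.sum_congr rfl fun k _ => by rw [abs_sq']] at hSi
      rw [← hU] at hSi
      rw [WK' N n hN hNn u i] at hSi
      exact Complex.ofReal_inj.mp hSi
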